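/- For every (x*, r) ∈ X* × ℝ the following are equivalent: (i) every x ∈ X satisfying G_u(x) ∈ −S for all u ∈ 𝒰 also satisfies ⟨x*, x⟩ ≥ r; (ii) (x*, r) ∈ −oco 𝓜₀, where oco denotes the closed convex hull in X* × ℝ (weak*-topology on X* times the usual topology on ℝ). -/

import Mathlib

open Pointwise

lemma weakDual_clf_rep {X : Type*}
    [AddCommGroup X] [Module ℝ X] [TopologicalSpace X]
    (ψ : WeakDual ℝ X →L[ℝ] ℝ) : ∃ x₁ : X, ∀ l : WeakDual ℝ X, ψ l = l x₁ := by
  set B := topDualPairing ℝ X with hB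
  set P : X → Seminorm ℝ (WeakDual ℝ X) := fun x => (B.toSeminormFamily x : Seminorm ℝ (WeakDual ℝ X)) with hP
  have hw : WithSeminorms P := B.weakBilin_withSeminorms
  have hNE : Nonempty X := ⟨0⟩
  set q : Seminorm ℝ (WeakDual ℝ X) := ψ.toLinearMap.toSeminorm with hq_def
  have hq : Continuous q := ψ.continuous.norm
  obtain ⟨s, C, hC, hle⟩ := Seminorm.bound_of_continuous (E := WeakDual ℝ X) hw q hq
  have hker : ∀ l : WeakDual ℝ X, (∀ x ∈ s, l x = 0) → ψ l = 0 := by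
    intro l hl
    have h1 : (s.sup P) l ≤ 0 := by
      apply Seminorm.finset_sup_apply_le le_rfl
      intro i hi
      have hbi : (B l) i = 0 := hl i hi
      show ‖(B l) i‖ ≤ 0
      simp [hbi]
    have h2 := hle l
    have h3 : (C • s.sup P) l = (C : ℝ) * (s.sup P) l := rfl
    have h4 : q l = ‖ψ l‖ := rfl
    have h5 : (0:ℝ) ≤ (C:ℝ) := C.2
    have h6 : ‖ψ l‖ ≤ 0 := by
      calc ‖ψ l‖ = q l := h4.symm
        _ ≤ _ := h2
        _ = _ := h3
        _ ≤ 0 := mul_nonpos_of_nonneg_of_nonpos h5 h1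
    simpa using norm_le_zero_iff.mp h6
  set L : ↥s → (WeakDual ℝ X →ₗ[ℝ] ℝ) := fun i => B.flip (i : X) with hL
  have hinf : (⨅ i : ↥s, LinearMap.ker (L i)) ≤ LinearMap.ker (ψ.toLinearMap) := by
    intro l hl
    simp only [Submodule.mem_iInf, LinearMap.mem_ker] at hl ⊢
    exact hker l (fun x hx => hl ⟨x, hx⟩)
  have hspan := mem_span_of_iInf_ker_le_ker (𝕜 := ℝ) hinf
  obtain ⟨c, hc⟩ := (Submodule.mem_span_range_iff_exists_fun ℝ).1 hspan
  refine ⟨∑ i : ↥s, c i • (i : X), fun l => ?_⟩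
  have h7 := LinearMap.congr_fun hc l
  simp only [LinearMap.coe_sum, Finset.sum_apply, LinearMap.smul_apply] at h7
  have h8 : ψ l = ∑ i : ↥s, c i • l (i : X) := h7.symm
  rw [h8, map_sum]
  exact Finset.sum_congr rfl fun i _ => (map_smul l _ _).symm

lemma sep_epi {X Z : Type*}
    [AddCommGroup X] [Module ℝ X] [TopologicalSpace X] [IsTopologicalAddGroup X]
    [ContinuousSMul ℝ X] [LocallyConvexSpace ℝ X]
    [AddCommGroup Z] [Module ℝ Z] [TopologicalSpace Z] [IsTopologicalAddGroup Z]
    [ContinuousSMul ℝ Z] [LocallyConvexSpace ℝ Z]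
    (S : Set Z) (hS_ne : S.Nonempty)
    (hS_cone : ∀ r : ℝ, 0 ≤ r → ∀ z ∈ S, r • z ∈ S)
    (Gu : X → Z)
    (hconv : Convex ℝ {p : X × Z | p.2 - Gu p.1 ∈ S})
    (hclosed : IsClosed {p : X × Z | p.2 - Gu p.1 ∈ S})
    (y : X) (hy : Gu y ∉ -S) :
    ∃ (g₁ : WeakDual ℝ X) (l : WeakDual ℝ Z) (α : ℝ),
      (∀ s ∈ S, 0 ≤ l s) ∧ (∀ x : X, g₁ x - l (Gu x) ≤ α) ∧ α < g₁ y ∧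
      (∀ x : X, Gu x ∈ -S → g₁ x < α) := by
  have hS0 : (0 : Z) ∈ S := by
    obtain ⟨z0, hz0⟩ := hS_ne
    simpa using hS_cone 0 le_rfl z0 hz0
  have hy' : ((y, (0:Z)) : X × Z) ∉ {p : X × Z | p.2 - Gu p.1 ∈ S} := by
    intro h
    exact hy (Set.mem_neg.2 (by simpa using h))
  obtain ⟨g, α, hsep, hlt⟩ := geometric_hahn_banach_closed_point hconv hclosed hy'
  set g₁ : X →L[ℝ] ℝ := g.comp (ContinuousLinearMap.inl ℝ X Z) with hg₁
  set g₂ : Z →L[ℝ] ℝ := g.comp (ContinuousLinearMap.inr ℝ X Z) with hg₂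
  have hg : ∀ (x : X) (z : Z), g (x, z) = g₁ x + g₂ z := by
    intro x z
    have h : ((x, z) : X × Z) = (x, (0:Z)) + ((0:X), z) := by simp
    rw [h, map_add]; rfl
  have hg2 : ∀ s ∈ S, g₂ s ≤ 0 := by
    intro s hs
    have h1 : ∀ t : ℝ, 0 ≤ t → g₁ y + (g₂ (Gu y) + t * g₂ s) < α := by
      intro t ht
      have hmem : ((y, Gu y + t • s) : X × Z) ∈ {p : X × Z | p.2 - Gu p.1 ∈ S} := by
        have h2 : (Gu y + t • s) - Gu y = t • s := by abel
        simpa [h2] using hS_cone t ht s hs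
      have h2 := hsep _ hmem
      rw [hg] at h2
      rw [map_add, map_smul, smul_eq_mul] at h2
      exact h2
    by_contra hpos
    push_neg at hpos
    have h0 := h1 0 le_rfl
    have hnn : 0 ≤ (α - g₁ y - g₂ (Gu y)) / g₂ s := div_nonneg (by linarith) hpos.le
    have h2 := h1 _ hnn
    rw [div_mul_cancel₀ _ (ne_of_gt hpos)] at h2
    linarith
  refine ⟨show WeakDual ℝ X from g₁, show WeakDual ℝ Z from -g₂, α, ?_, ?_, ?_, ?_⟩
  · intro s hs
    have := hg2 s hs
    show (0:ℝ) ≤ -(g₂ s)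
    linarith
  · intro x
    have hmem : ((x, Gu x) : X × Z) ∈ {p : X × Z | p.2 - Gu p.1 ∈ S} := by
      simpa using hS0
    have := hsep _ hmem
    rw [hg] at this
    show g₁ x - (-(g₂ (Gu x))) ≤ α
    linarith
  · have h2 : g (y, 0) = g₁ y + g₂ 0 := hg y 0
    rw [map_zero] at h2
    show α < g₁ y
    linarith
  · intro x hx
    have hmem : ((x, (0:Z)) : X × Z) ∈ {p : X × Z | p.2 - Gu p.1 ∈ S} := by
      simpa using Set.mem_neg.1 hx
    have h2 := hsep _ hmem
    rw [hg, map_zero] at h2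
    show g₁ x < α
    linarith

set_option maxHeartbeats 1000000 in
/-- Robust Farkas-type result for conical constraint systems with uncertainty
(Proposition 2.1 / `lem_FL`). -/
theorem stmt0
    {X Z : Type*}
    [AddCommGroup X] [Module ℝ X] [TopologicalSpace X] [IsTopologicalAddGroup X]
    [ContinuousSMul ℝ X] [LocallyConvexSpace ℝ X] [T2Space X]
    [AddCommGroup Z] [Module ℝ Z] [TopologicalSpace Z] [IsTopologicalAddGroup Z]
    [ContinuousSMul ℝ Z] [LocallyConvexSpace ℝ Z] [T2Space Z]
    (S : Set Z) (hS_ne : S.Nonempty) (hS_closed : IsClosed S) (hS_conv : Convex ℝ S)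
    (hS_cone : ∀ r : ℝ, 0 ≤ r → ∀ z ∈ S, r • z ∈ S)
    {ι : Type*} [Nonempty ι] (G : ι → X → Z)
    (hG_conv : ∀ u : ι, Convex ℝ {p : X × Z | p.2 - G u p.1 ∈ S})
    (hG_closed : ∀ u : ι, IsClosed {p : X × Z | p.2 - G u p.1 ∈ S})
    (hF : {x : X | ∀ u : ι, G u x ∈ -S}.Nonempty)
    (xs : WeakDual ℝ X) (r : ℝ) :
    (∀ x : X, (∀ u : ι, G u x ∈ -S) → r ≤ xs x) ↔
      (xs, r) ∈ -closure (convexHull ℝ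
        (⋃ u : ι, ⋃ l ∈ {l : WeakDual ℝ Z | ∀ s ∈ S, 0 ≤ l s},
          {q : WeakDual ℝ X × ℝ | ∀ x : X, q.1 x - l (G u x) ≤ q.2})) := by
  haveI : LocallyConvexSpace ℝ (WeakDual ℝ X) :=
    WeakBilin.locallyConvexSpace (B := topDualPairing ℝ X)
  set M : Set (WeakDual ℝ X × ℝ) :=
    (⋃ u : ι, ⋃ l ∈ {l : WeakDual ℝ Z | ∀ s ∈ S, 0 ≤ l s},
      {q : WeakDual ℝ X × ℝ | ∀ x : X, q.1 x - l (G u x) ≤ q.2}) with hM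
  have hmemM : ∀ q : WeakDual ℝ X × ℝ,
      q ∈ M ↔ ∃ u : ι, ∃ l : WeakDual ℝ Z, (∀ s ∈ S, 0 ≤ l s) ∧
        ∀ x : X, q.1 x - l (G u x) ≤ q.2 := by
    intro q
    simp only [hM, Set.mem_iUnion, Set.mem_setOf_eq]
    tauto
  set C : Set (WeakDual ℝ X × ℝ) := closure (convexHull ℝ M) with hC
  have hgoal : ((xs, r) ∈ -C) ↔ ((-xs, -r) ∈ C) := by
    rw [Set.mem_neg, Prod.neg_mk]
  rw [hgoal]
  constructor
  · -- hard direction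
    intro hyp
    by_contra hnotC
    have hCconv : Convex ℝ C := (convex_convexHull ℝ M).closure
    obtain ⟨f, u0, hfsep, hflt⟩ :=
      geometric_hahn_banach_closed_point hCconv isClosed_closure hnotC
    -- 0 ∈ C
    have h0M : (0 : WeakDual ℝ X × ℝ) ∈ M := by
      rw [hmemM]
      refine ⟨Classical.arbitrary ι, 0, fun s _ => le_rfl, fun x => ?_⟩
      show (0 : WeakDual ℝ X) x - (0 : WeakDual ℝ Z) (G (Classical.arbitrary ι) x) ≤ (0:ℝ)
      rw [show ((0:WeakDual ℝ X)) x = 0 from rfl,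
        show ((0:WeakDual ℝ Z)) (G (Classical.arbitrary ι) x) = 0 from rfl]
      norm_num
    have h0C : (0 : WeakDual ℝ X × ℝ) ∈ C := subset_closure (subset_convexHull ℝ M h0M)
    have hu0pos : 0 < u0 := by
      have := hfsep 0 h0C
      simpa using this
    -- M is a cone
    have hMcone : ∀ t : ℝ, 0 < t → ∀ q ∈ M, t • q ∈ M := by
      intro t ht q hq
      rw [hmemM] at hq ⊢
      obtain ⟨u, l, hl, hql⟩ := hq
      refine ⟨u, t • l, fun s hs => ?_, fun x => ?_⟩
      · show (0:ℝ) ≤ t * l s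
        exact mul_nonneg ht.le (hl s hs)
      · show t * q.1 x - t * l (G u x) ≤ t * q.2
        have := mul_le_mul_of_nonneg_left (hql x) ht.le
        nlinarith [this]
    have hCcone : ∀ t : ℝ, 0 < t → ∀ a ∈ C, t • a ∈ C := by
      intro t ht a ha
      refine map_mem_closure (continuous_const_smul t) ha ?_
      intro b hb
      have h1 : t • b ∈ t • convexHull ℝ M := Set.smul_mem_smul_set hb
      rw [← convexHull_smul] at h1
      refine convexHull_mono ?_ h1
      intro y hy
      obtain ⟨m, hm, rfl⟩ := hy
      exact hMcone t ht m hm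
    have hfle : ∀ a ∈ C, f a ≤ 0 := by
      intro a ha
      by_contra hpos
      push_neg at hpos
      have ht : 0 < (u0 + 1) / f a := by positivity
      have h2 := hfsep _ (hCcone _ ht a ha)
      rw [map_smul, smul_eq_mul, div_mul_cancel₀ _ (ne_of_gt hpos)] at h2
      linarith
    -- decompose f
    set ψ : WeakDual ℝ X →L[ℝ] ℝ := f.comp (ContinuousLinearMap.inl ℝ (WeakDual ℝ X) ℝ) with hψ
    set c : ℝ := f (0, 1) with hc
    have hf : ∀ (l : WeakDual ℝ X) (t : ℝ), f (l, t) = ψ l + t * c := by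
      intro l t
      have h : ((l, t) : WeakDual ℝ X × ℝ) = (l, 0) + (0, t) := by simp
      rw [h, map_add]
      have h2 : ((0 : WeakDual ℝ X), t) = t • ((0 : WeakDual ℝ X), (1:ℝ)) := by simp
      rw [h2, map_smul]
      rfl
    obtain ⟨x₁, hx₁⟩ := weakDual_clf_rep ψ
    have hfM : ∀ q ∈ M, q.1 x₁ + c * q.2 ≤ 0 := by
      intro q hq
      have h1 := hfle q (subset_closure (subset_convexHull ℝ M hq))
      have h2 : f q = ψ q.1 + q.2 * c := hf q.1 q.2
      have h3 := hx₁ q.1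
      nlinarith [h1, h2, h3]
    have hc0 : c ≤ 0 := by
      have hqM : (((0 : WeakDual ℝ X), (1:ℝ)) : WeakDual ℝ X × ℝ) ∈ M := by
        rw [hmemM]
        refine ⟨Classical.arbitrary ι, 0, fun s _ => le_rfl, fun x => ?_⟩
        show (0 : WeakDual ℝ X) x - (0 : WeakDual ℝ Z) (G (Classical.arbitrary ι) x) ≤ (1:ℝ)
        rw [show ((0:WeakDual ℝ X)) x = 0 from rfl,
          show ((0:WeakDual ℝ Z)) (G (Classical.arbitrary ι) x) = 0 from rfl]
        norm_num
      have h9 : ((0 : WeakDual ℝ X)) x₁ + c * 1 ≤ 0 := hfM _ hqM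
      have hz : ((0 : WeakDual ℝ X)) x₁ = 0 := rfl
      rw [hz] at h9
      linarith
    have hflt' : u0 < -(xs x₁) + (-r) * c := by
      have h1 : f (-xs, -r) = ψ (-xs) + (-r) * c := hf (-xs) (-r)
      have h2 : ψ (-xs) = (-xs) x₁ := hx₁ (-xs)
      have h3 : (-xs) x₁ = -(xs x₁) := rfl
      rw [h1, h2, h3] at hflt
      exact hflt
    rcases lt_or_eq_of_le hc0 with hclt | hceq
    · -- c < 0
      set x₀ : X := (-c)⁻¹ • x₁ with hx₀
      have hckey : ∀ q ∈ M, q.1 x₀ ≤ q.2 := by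
        intro q hq
        have h1 := hfM q hq
        have h2 : q.1 x₀ = (-c)⁻¹ * q.1 x₁ := by
          rw [hx₀, map_smul]; rfl
        rw [h2, inv_mul_le_iff₀ (by linarith : (0:ℝ) < -c)]
        nlinarith [h1]
      have hx₀F : ∀ u : ι, G u x₀ ∈ -S := by
        intro u
        by_contra hxu
        obtain ⟨g₁, l, α, hlS, hbound, hαlt, _⟩ :=
          sep_epi S hS_ne hS_cone (G u) (hG_conv u) (hG_closed u) x₀ hxu
        have hqM : ((g₁, α) : WeakDual ℝ X × ℝ) ∈ M := by
          rw [hmemM]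
          exact ⟨u, l, hlS, fun x => hbound x⟩
        have h10 : g₁ x₀ ≤ α := hckey _ hqM
        linarith
      have h2 := hyp x₀ hx₀F
      have h3 : xs x₀ = (-c)⁻¹ * xs x₁ := by
        rw [hx₀, map_smul]; rfl
      rw [h3, le_inv_mul_iff₀ (by linarith : (0:ℝ) < -c)] at h2
      nlinarith [h2, hflt', hu0pos]
    · -- c = 0
      have hfM' : ∀ q ∈ M, q.1 x₁ ≤ 0 := by
        intro q hq
        have h := hfM q hq
        have hz : c * q.2 = 0 := by rw [hceq]; ring
        linarith
      obtain ⟨xb, hxb⟩ := hF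
      have hxb' : ∀ u : ι, G u xb ∈ -S := hxb
      have hline : ∀ t : ℝ, 0 ≤ t → ∀ u : ι, G u (xb + t • x₁) ∈ -S := by
        intro t ht u
        by_contra hxu
        obtain ⟨g₁, l, α, hlS, hbound, hαlt, hstrict⟩ :=
          sep_epi S hS_ne hS_cone (G u) (hG_conv u) (hG_closed u) (xb + t • x₁) hxu
        have hqM : ((g₁, α) : WeakDual ℝ X × ℝ) ∈ M := by
          rw [hmemM]
          exact ⟨u, l, hlS, fun x => hbound x⟩
        have h1 : g₁ x₁ ≤ 0 := hfM' _ hqM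
        have h2 : g₁ xb < α := hstrict xb (hxb' u)
        have h3 : g₁ (xb + t • x₁) = g₁ xb + t * g₁ x₁ := by
          rw [map_add, map_smul]; rfl
        have h4 : t * g₁ x₁ ≤ 0 := mul_nonpos_of_nonneg_of_nonpos ht h1
        rw [h3] at hαlt
        linarith
      have hxs1 : xs x₁ < 0 := by
        have hz : -r * c = 0 := by rw [hceq]; ring
        linarith
      have hrxb : r ≤ xs xb := hyp xb hxb'
      obtain ⟨t, htnn, h4⟩ : ∃ t : ℝ, 0 ≤ t ∧
          t * (-(xs x₁)) = (xs xb - r) + (-(xs x₁)) := by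
        refine ⟨(xs xb - r) / (-(xs x₁)) + 1, ?_, ?_⟩
        · have hd : 0 ≤ (xs xb - r) / (-(xs x₁)) :=
            div_nonneg (by linarith) (by linarith)
          linarith
        · rw [add_mul, one_mul,
            div_mul_cancel₀ _ (ne_of_gt (by linarith : (0:ℝ) < -(xs x₁)))]
      have hmem := hline t htnn
      have h2 := hyp _ hmem
      have h3 : xs (xb + t • x₁) = xs xb + t * xs x₁ := by
        rw [map_add, map_smul]; rfl
      have h5 : t * (-(xs x₁)) = -(t * xs x₁) := by ring
      linarith [h2, h3]
  · -- easy direction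
    intro hmem x hx
    set K : Set (WeakDual ℝ X × ℝ) :=
      {q : WeakDual ℝ X × ℝ | ∀ y : X, (∀ u : ι, G u y ∈ -S) → q.1 y ≤ q.2} with hK
    have hKclosed : IsClosed K := by
      have hKeq : K = ⋂ y ∈ {y : X | ∀ u : ι, G u y ∈ -S},
          {q : WeakDual ℝ X × ℝ | q.1 y ≤ q.2} := by
        ext q
        simp [hK]
      rw [hKeq]
      exact isClosed_biInter fun y _ =>
        isClosed_le ((WeakDual.eval_continuous y).comp continuous_fst) continuous_snd
    have hKconv : Convex ℝ K := by
      intro p hp q hq a b ha hb hab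
      intro y hy
      have h1 := hp y hy
      have h2 := hq y hy
      show (a • p + b • q).1 y ≤ (a • p + b • q).2
      have e1 : (a • p + b • q).1 y = a * p.1 y + b * q.1 y := rfl
      have e2 : (a • p + b • q).2 = a * p.2 + b * q.2 := rfl
      rw [e1, e2]
      exact add_le_add (mul_le_mul_of_nonneg_left h1 ha) (mul_le_mul_of_nonneg_left h2 hb)
    have hMK : M ⊆ K := by
      intro q hq
      rw [hmemM] at hq
      obtain ⟨u, l, hl, hql⟩ := hq
      intro y hy
      have h1 := hql y
      have h2 : l (G u y) ≤ 0 := by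
        have h3 : -(G u y) ∈ S := Set.mem_neg.1 (hy u)
        have h4 := hl _ h3
        rw [map_neg] at h4
        linarith
      linarith
    have hCK : C ⊆ K := closure_minimal (convexHull_min hMK hKconv) hKclosed
    have h1 := hCK hmem x hx
    have h2 : ((-xs, -r) : WeakDual ℝ X × ℝ).1 x = -(xs x) := rfl
    rw [h2] at h1
    simp only at h1
    linarith
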